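/- Define b : ℝ² → ℝ by b(x₁, x₂) = |x₁ x₂|. Then for every K > 0, every r > 0 and every sequence (x_n) ⊂ ℝ² with |x_n| → ∞, the Lebesgue measure of the set {y ∈ ℝ² : |y₁ y₂| < K} ∩ B_r(x_n) tends to 0 as n → ∞, where B_r(x_n) = {y ∈ ℝ² : |y − x_n| < r}. -/

import Mathlib

open MeasureTheory Filter

lemma coord_abs_le_norm (x : EuclideanSpace ℝ (Fin 2)) (i : Fin 2) : |x i| ≤ ‖x‖ := by
  rw [EuclideanSpace.norm_eq, Fin.sum_univ_two]
  rw [show |x i| = Real.sqrt (|x i| ^ 2) from (Real.sqrt_sq (abs_nonneg _)).symm]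
  apply Real.sqrt_le_sqrt
  fin_cases i <;> simp [Real.norm_eq_abs, sq_abs] <;> nlinarith [sq_nonneg (x 0), sq_nonneg (x 1)]

lemma norm_le_sum_abs (x : EuclideanSpace ℝ (Fin 2)) : ‖x‖ ≤ |x 0| + |x 1| := by
  rw [EuclideanSpace.norm_eq, Fin.sum_univ_two]
  have h : ‖x 0‖ ^ 2 + ‖x 1‖ ^ 2 ≤ (|x 0| + |x 1|) ^ 2 := by
    simp only [Real.norm_eq_abs, sq_abs]
    nlinarith [abs_nonneg (x 0), abs_nonneg (x 1), sq_abs (x 0), sq_abs (x 1)]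
  calc Real.sqrt (‖x 0‖ ^ 2 + ‖x 1‖ ^ 2) ≤ Real.sqrt ((|x 0| + |x 1|) ^ 2) :=
        Real.sqrt_le_sqrt h
    _ = |x 0| + |x 1| := Real.sqrt_sq (by positivity)

lemma vol_rect (s t : Set ℝ) (hs : MeasurableSet s) (ht : MeasurableSet t) :
    volume {y : EuclideanSpace ℝ (Fin 2) | y 0 ∈ s ∧ y 1 ∈ t} = volume s * volume t := by
  have hpres := EuclideanSpace.volume_preserving_symm_measurableEquiv_toLp (Fin 2)
  set e := (MeasurableEquiv.toLp 2 (Fin 2 → ℝ)).symm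
  have hset : {y : EuclideanSpace ℝ (Fin 2) | y 0 ∈ s ∧ y 1 ∈ t}
      = e ⁻¹' (Set.univ.pi ![s, t]) := by
    ext y
    simp [Set.mem_pi, Fin.forall_fin_two, e]
  have hpi : MeasurableSet (Set.univ.pi ![s, t]) := by
    apply MeasurableSet.univ_pi
    intro i; fin_cases i <;> simpa
  rw [hset, hpres.measure_preimage hpi.nullMeasurableSet, volume_pi_pi]
  simp [Fin.prod_univ_two]

theorem stmt_14 (K r : ℝ) (hK : 0 < K) (hr : 0 < r)
    (xs : ℕ → EuclideanSpace ℝ (Fin 2))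
    (hxs : Tendsto (fun n => ‖xs n‖) atTop atTop) :
    Tendsto (fun n =>
        volume ({y : EuclideanSpace ℝ (Fin 2) | |y 0 * y 1| < K} ∩ Metric.ball (xs n) r))
      atTop (nhds 0) := by
  set M : ℕ → ℝ := fun n => max |xs n 0| |xs n 1| with hMdef
  have hM : Tendsto M atTop atTop := by
    apply tendsto_atTop_mono (fun n => ?_) (hxs.atTop_div_const (by norm_num : (0:ℝ) < 2))
    have h1 := norm_le_sum_abs (xs n)
    have h2 := le_max_left |xs n 0| |xs n 1|
    have h3 := le_max_right |xs n 0| |xs n 1|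
    simp only [hMdef]
    linarith
  have hMr : Tendsto (fun n => M n - r) atTop atTop := by
    simpa [sub_eq_add_neg] using tendsto_atTop_add_const_right atTop (-r) hM
  have hdiv : Tendsto (fun n => (8 * r * K) / (M n - r)) atTop (nhds 0) :=
    Tendsto.div_atTop tendsto_const_nhds hMr
  have hupper : Tendsto (fun n => ENNReal.ofReal ((8 * r * K) / (M n - r))) atTop (nhds 0) := by
    simpa using ENNReal.tendsto_ofReal hdiv
  apply tendsto_of_tendsto_of_tendsto_of_le_of_le' tendsto_const_nhds hupper
  · exact Eventually.of_forall fun n => zero_le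
  · filter_upwards [hMr.eventually_ge_atTop 1] with n hn
    have hMr0 : 0 < M n - r := lt_of_lt_of_le one_pos hn
    set ε : ℝ := K / (M n - r) with hεdef
    have hε : 0 < ε := div_pos hK hMr0
    set c := xs n
    -- inclusion in union of two rectangles
    have hincl : {y : EuclideanSpace ℝ (Fin 2) | |y 0 * y 1| < K} ∩ Metric.ball c r ⊆
        {y : EuclideanSpace ℝ (Fin 2) | y 0 ∈ Set.Ioo (-ε) ε ∧ y 1 ∈ Set.Ioo (c 1 - r) (c 1 + r)}
        ∪ {y : EuclideanSpace ℝ (Fin 2) | y 0 ∈ Set.Ioo (c 0 - r) (c 0 + r) ∧ y 1 ∈ Set.Ioo (-ε) ε} := by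
      rintro y ⟨hy1, hy2⟩
      simp only [Set.mem_setOf_eq] at hy1
      rw [Metric.mem_ball, dist_eq_norm] at hy2
      have hc0 : |y 0 - c 0| < r := by
        have := coord_abs_le_norm (y - c) 0
        simp only [PiLp.sub_apply] at this
        linarith
      have hc1 : |y 1 - c 1| < r := by
        have := coord_abs_le_norm (y - c) 1
        simp only [PiLp.sub_apply] at this
        linarith
      rcases le_or_gt |c 1| |c 0| with h | h
      · -- M n = |c 0|, so |y 0| large, |y 1| < ε : right rectangle
        right
        have hM0 : M n = |c 0| := max_eq_left h
        have hy0big : M n - r ≤ |y 0| := by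
          have := abs_sub_abs_le_abs_sub (c 0) (y 0)
          rw [abs_sub_comm] at this
          rw [hM0]; linarith
        have hy1small : |y 1| < ε := by
          rw [hεdef, lt_div_iff₀ hMr0]
          calc |y 1| * (M n - r) ≤ |y 1| * |y 0| := by
                apply mul_le_mul_of_nonneg_left hy0big (abs_nonneg _)
            _ = |y 0 * y 1| := by rw [abs_mul]; ring
            _ < K := hy1
        constructor
        · simp only [Set.mem_Ioo]
          constructor <;> [linarith [abs_lt.mp hc0]; linarith [(abs_lt.mp hc0).2]]
        · exact Set.mem_Ioo.mpr ⟨by linarith [(abs_lt.mp hy1small).1], (abs_lt.mp hy1small).2⟩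
      · left
        have hM0 : M n = |c 1| := max_eq_right h.le
        have hy1big : M n - r ≤ |y 1| := by
          have := abs_sub_abs_le_abs_sub (c 1) (y 1)
          rw [abs_sub_comm] at this
          rw [hM0]; linarith
        have hy0small : |y 0| < ε := by
          rw [hεdef, lt_div_iff₀ hMr0]
          calc |y 0| * (M n - r) ≤ |y 0| * |y 1| := by
                apply mul_le_mul_of_nonneg_left hy1big (abs_nonneg _)
            _ = |y 0 * y 1| := abs_mul _ _ |>.symm
            _ < K := hy1
        constructor
        · exact Set.mem_Ioo.mpr ⟨by linarith [(abs_lt.mp hy0small).1], (abs_lt.mp hy0small).2⟩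
        · simp only [Set.mem_Ioo]
          constructor <;> [linarith [(abs_lt.mp hc1).1]; linarith [(abs_lt.mp hc1).2]]
    calc volume ({y : EuclideanSpace ℝ (Fin 2) | |y 0 * y 1| < K} ∩ Metric.ball c r)
        ≤ volume ({y : EuclideanSpace ℝ (Fin 2) | y 0 ∈ Set.Ioo (-ε) ε ∧ y 1 ∈ Set.Ioo (c 1 - r) (c 1 + r)}
          ∪ {y : EuclideanSpace ℝ (Fin 2) | y 0 ∈ Set.Ioo (c 0 - r) (c 0 + r) ∧ y 1 ∈ Set.Ioo (-ε) ε}) :=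
          measure_mono hincl
      _ ≤ volume {y : EuclideanSpace ℝ (Fin 2) | y 0 ∈ Set.Ioo (-ε) ε ∧ y 1 ∈ Set.Ioo (c 1 - r) (c 1 + r)}
          + volume {y : EuclideanSpace ℝ (Fin 2) | y 0 ∈ Set.Ioo (c 0 - r) (c 0 + r) ∧ y 1 ∈ Set.Ioo (-ε) ε} :=
          measure_union_le _ _
      _ = ENNReal.ofReal (2 * ε) * ENNReal.ofReal (2 * r)
          + ENNReal.ofReal (2 * r) * ENNReal.ofReal (2 * ε) := by
          rw [vol_rect _ _ measurableSet_Ioo measurableSet_Ioo,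
            vol_rect _ _ measurableSet_Ioo measurableSet_Ioo, Real.volume_Ioo, Real.volume_Ioo,
            show ε - -ε = 2 * ε by ring, show c 1 + r - (c 1 - r) = 2 * r by ring,
            Real.volume_Ioo, show c 0 + r - (c 0 - r) = 2 * r by ring]
      _ = ENNReal.ofReal ((8 * r * K) / (M n - r)) := by
          rw [← ENNReal.ofReal_mul (by linarith), ← ENNReal.ofReal_mul (by linarith),
            ← ENNReal.ofReal_add (by positivity) (by positivity)]
          congr 1
          rw [hεdef]
          field_simp
          ring
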